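/- Suppose ρ_h, ω_h, u_h : [0,T] → V_h^k (with ρ_h, ω_h differentiable in s) satisfy, for every cell I_j and all test functions φ, ϕ, ψ ∈ V_h^k: ((ρ_h)_s, φ)_{I_j} + (u_h ω_h, φ)_{I_j} = 0; ((ω_h)_s, ϕ)_{I_j} = (ρ_h u_h, ϕ)_{I_j}; and (ω_h, ψ)_{I_j} = ⟨u_h⁺, ψ⟩_{I_j} − (u_h, ψ_y)_{I_j}. Then the discrete quantity H_1(ρ_h, ω_h) = ∫_{y_L}^{y_R} (ρ_h² + ω_h²) dy is conserved: d/ds ∫_{y_L}^{y_R} (ρ_h² + ω_h²) dy = 0 for all s. -/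

import Mathlib

open MeasureTheory Polynomial
open scoped Classical

noncomputable section

/- Mesh with `N + 1` cells: cell `j` is `I_j = [grid j.castSucc, grid j.succ]`.
A DG function in `V_h^k` is represented by the family of its polynomial restrictions
to the cells; interfaces are indexed cyclically. -/

/-- Left endpoint of cell `j`. -/
def lep {N : ℕ} (grid : Fin (N + 2) → ℝ) (j : Fin (N + 1)) : ℝ := grid j.castSucc

/-- Right endpoint of cell `j`. -/
def rep {N : ℕ} (grid : Fin (N + 2) → ℝ) (j : Fin (N + 1)) : ℝ := grid j.succ

/-- `∫_{I_j} f dy`. -/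
def cellInt {N : ℕ} (grid : Fin (N + 2) → ℝ) (j : Fin (N + 1)) (f : ℝ → ℝ) : ℝ :=
  ∫ y in lep grid j..rep grid j, f y

/-- Trace `w⁺` at the interface `y_{j+1/2}`, from the right cell `I_{j+1}` (cyclically). -/
def trP {N : ℕ} (grid : Fin (N + 2) → ℝ) (f : Fin (N + 1) → Polynomial ℝ)
    (j : Fin (N + 1)) : ℝ :=
  (f (j + 1)).eval (lep grid (j + 1))

/-- Boundary bracket `⟨ĥ, φ⟩_{I_j} = ĥ_{j+1/2} φ⁻_{j+1/2} - ĥ_{j-1/2} φ⁺_{j-1/2}`, where the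
interface values `ĥ` are indexed by the right interface of each cell (cyclically). -/
def brk {N : ℕ} (grid : Fin (N + 2) → ℝ) (hat : Fin (N + 1) → ℝ) (φ : Polynomial ℝ)
    (j : Fin (N + 1)) : ℝ :=
  hat j * φ.eval (rep grid j) - hat (j - 1) * φ.eval (lep grid j)


lemma nodes_injOn (k : ℕ) :
    Set.InjOn (fun i : Fin (k+1) => ((i : ℕ) : ℝ)) (Finset.univ : Finset (Fin (k+1))) := by
  intro i _ j _ h
  exact Fin.ext (Nat.cast_injective (R := ℝ) (by simpa using h))

lemma lag_eval (k : ℕ) (p : ℝ[X]) (hp : p.natDegree ≤ k) (y : ℝ) :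
    p.eval y = ∑ i : Fin (k+1),
      (Lagrange.basis Finset.univ (fun i : Fin (k+1) => ((i : ℕ) : ℝ)) i).eval y
        * p.eval ((i : ℕ) : ℝ) := by
  have hdeg : p.degree < ((Finset.univ : Finset (Fin (k+1))).card : WithBot ℕ) := by
    rw [Finset.card_univ, Fintype.card_fin]
    exact lt_of_le_of_lt p.degree_le_natDegree (by exact_mod_cast Nat.lt_succ_of_le hp)
  conv_lhs => rw [Lagrange.eq_interpolate (nodes_injOn k) hdeg]
  rw [Lagrange.interpolate_apply, Polynomial.eval_finset_sum]
  exact Finset.sum_congr rfl fun i _ => by rw [Polynomial.eval_mul, Polynomial.eval_C]; ring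

lemma int_sum_mul_sum (a b : ℝ) {m : ℕ} (c c' : Fin m → ℝ) (g g' : Fin m → ℝ → ℝ)
    (hg : ∀ i, Continuous (g i)) (hg' : ∀ i, Continuous (g' i)) :
    (∫ y in a..b, (∑ i, g i y * c i) * (∑ i, g' i y * c' i))
      = ∑ i, ∑ i', c i * c' i' * ∫ y in a..b, g i y * g' i' y := by
  have h1 : ∀ y, (∑ i, g i y * c i) * (∑ i', g' i' y * c' i')
      = ∑ i, ∑ i', c i * c' i' * (g i y * g' i' y) := by
    intro y
    rw [Finset.sum_mul_sum]
    exact Finset.sum_congr rfl fun i _ => Finset.sum_congr rfl fun i' _ => by ring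
  simp_rw [h1]
  rw [intervalIntegral.integral_finset_sum (fun i _ => by
    apply Continuous.intervalIntegrable
    exact continuous_finset_sum _ fun i' _ => continuous_const.mul ((hg i).mul (hg' i')))]
  refine Finset.sum_congr rfl fun i _ => ?_
  rw [intervalIntegral.integral_finset_sum (fun i' _ => by
    exact (continuous_const.mul ((hg i).mul (hg' i'))).intervalIntegrable _ _)]
  exact Finset.sum_congr rfl fun i' _ => intervalIntegral.integral_const_mul _ _

lemma sq_int_deriv (k : ℕ) (a b : ℝ) (p : ℝ → ℝ[X]) (q : ℝ[X])
    (hdeg : ∀ τ, (p τ).natDegree ≤ k) (s : ℝ)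
    (hq : ∀ y, HasDerivAt (fun τ => (p τ).eval y) (q.eval y) s) :
    HasDerivAt (fun τ => ∫ y in a..b, ((p τ).eval y) ^ 2)
      (∫ y in a..b, 2 * (p s).eval y * q.eval y) s := by
  set v : Fin (k+1) → ℝ := fun i => ((i : ℕ) : ℝ) with hv
  set B : Fin (k+1) → ℝ[X] := fun i => Lagrange.basis Finset.univ v i with hB
  set f : Fin (k+1) → ℝ → ℝ := fun i τ => (p τ).eval (v i) with hf
  set d : Fin (k+1) → ℝ := fun i => q.eval (v i) with hd
  set C : Fin (k+1) → Fin (k+1) → ℝ := fun i i' => ∫ y in a..b, (B i).eval y * (B i').eval y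
    with hC
  have hBc : ∀ i, Continuous fun y => (B i).eval y := fun i => (B i).continuous
  -- nodal representation of p τ and of q
  have hrepP : ∀ τ y, (p τ).eval y = ∑ i, (B i).eval y * f i τ := fun τ y =>
    lag_eval k (p τ) (hdeg τ) y
  have hrepQ : ∀ y, q.eval y = ∑ i, (B i).eval y * d i := by
    intro y
    have h1 : HasDerivAt (fun τ => (p τ).eval y) (∑ i, (B i).eval y * d i) s := by
      have : (fun τ => (p τ).eval y) = fun τ => ∑ i, (B i).eval y * f i τ :=
        funext fun τ => hrepP τ y
      rw [this]
      exact HasDerivAt.fun_sum fun i _ => (hq (v i)).const_mul _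
    exact (hq y).unique h1
  -- rewrite the squared integral as a finite bilinear expression
  have hfun : (fun τ => ∫ y in a..b, ((p τ).eval y) ^ 2)
      = fun τ => ∑ i, ∑ i', f i τ * f i' τ * C i i' := by
    funext τ
    have : (fun y => ((p τ).eval y) ^ 2)
        = fun y => (∑ i, (B i).eval y * f i τ) * (∑ i, (B i).eval y * f i τ) := by
      funext y; rw [sq, hrepP τ y]
    rw [this, int_sum_mul_sum a b _ _ _ _ hBc hBc]
  -- derivative of the bilinear expression
  have hder : HasDerivAt (fun τ => ∑ i, ∑ i', f i τ * f i' τ * C i i')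
      (∑ i, ∑ i', (d i * f i' s + f i s * d i') * C i i') s := by
    refine HasDerivAt.fun_sum fun i _ => HasDerivAt.fun_sum fun i' _ => ?_
    exact ((hq (v i)).mul (hq (v i'))).mul_const _
  rw [hfun]
  convert hder using 1
  -- identify the derivative value with the integral
  have Csymm : ∀ i i', C i i' = C i' i := fun i i' =>
    intervalIntegral.integral_congr fun y _ => by ring
  have hval : (∫ y in a..b, 2 * (p s).eval y * q.eval y)
      = 2 * ∑ i, ∑ i', f i s * d i' * C i i' := by
    have : (fun y => 2 * (p s).eval y * q.eval y)
        = fun y => 2 * ((∑ i, (B i).eval y * f i s) * (∑ i, (B i).eval y * d i)) := by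
      funext y; rw [← hrepP s y, ← hrepQ y]; ring
    rw [this, intervalIntegral.integral_const_mul, int_sum_mul_sum a b _ _ _ _ hBc hBc]
  rw [hval]
  have hswap : ∑ i, ∑ i', d i * f i' s * C i i' = ∑ i, ∑ i', f i s * d i' * C i i' := by
    rw [Finset.sum_comm]
    exact Finset.sum_congr rfl fun i _ => Finset.sum_congr rfl fun i' _ => by
      rw [Csymm i' i]; ring
  calc 2 * ∑ i, ∑ i', f i s * d i' * C i i'
      = (∑ i, ∑ i', d i * f i' s * C i i') + ∑ i, ∑ i', f i s * d i' * C i i' := by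
        rw [hswap]; ring
    _ = ∑ i, ∑ i', (d i * f i' s + f i s * d i') * C i i' := by
        rw [← Finset.sum_add_distrib]
        refine Finset.sum_congr rfl fun i _ => ?_
        rw [← Finset.sum_add_distrib]
        exact Finset.sum_congr rfl fun i' _ => by ring

/-- **`H₁`-conservation of the semi-discrete DG scheme for the coupled dispersionless system
written as `ρ_s + uω = 0`, `ω_s = ρu`, `ω = u_y`**, with the upwind numerical flux
`û = u⁺`. The discrete quantity `H₁(ρ_h, ω_h) = ∫_I (ρ_h² + ω_h²) dy` satisfies
`d/ds H₁ = 0` for all `s`. -/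
theorem CD_DG_H1_conserved
    (N k : ℕ) (grid : Fin (N + 2) → ℝ) (hgrid : StrictMono grid)
    (ρ w u ρ' w' : ℝ → Fin (N + 1) → Polynomial ℝ)
    (hdeg : ∀ s j, (ρ s j).natDegree ≤ k ∧ (w s j).natDegree ≤ k ∧ (u s j).natDegree ≤ k)
    (hρ' : ∀ (s : ℝ) (j : Fin (N + 1)) (y : ℝ),
      HasDerivAt (fun τ => (ρ τ j).eval y) ((ρ' s j).eval y) s)
    (hw' : ∀ (s : ℝ) (j : Fin (N + 1)) (y : ℝ),
      HasDerivAt (fun τ => (w τ j).eval y) ((w' s j).eval y) s)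
    (scheme1 : ∀ (s : ℝ) (j : Fin (N + 1)) (φ : Polynomial ℝ), φ.natDegree ≤ k →
      cellInt grid j (fun y => (ρ' s j).eval y * φ.eval y)
        + cellInt grid j (fun y => (u s j).eval y * (w s j).eval y * φ.eval y) = 0)
    (scheme2 : ∀ (s : ℝ) (j : Fin (N + 1)) (φ : Polynomial ℝ), φ.natDegree ≤ k →
      cellInt grid j (fun y => (w' s j).eval y * φ.eval y)
        = cellInt grid j (fun y => (ρ s j).eval y * (u s j).eval y * φ.eval y))
    (scheme3 : ∀ (s : ℝ) (j : Fin (N + 1)) (ψ : Polynomial ℝ), ψ.natDegree ≤ k →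
      cellInt grid j (fun y => (w s j).eval y * ψ.eval y)
        = brk grid (trP grid (u s)) ψ j
          - cellInt grid j (fun y => (u s j).eval y * ψ.derivative.eval y))
    (s : ℝ) :
    HasDerivAt
      (fun τ => ∑ j, cellInt grid j (fun y => ((ρ τ j).eval y) ^ 2 + ((w τ j).eval y) ^ 2))
      0 s := by
  have hD : ∀ j : Fin (N + 1), HasDerivAt
      (fun τ => cellInt grid j (fun y => ((ρ τ j).eval y) ^ 2 + ((w τ j).eval y) ^ 2)) 0 s := by
    intro j
    have hsplit : (fun τ => cellInt grid j
          (fun y => ((ρ τ j).eval y) ^ 2 + ((w τ j).eval y) ^ 2))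
        = fun τ => (∫ y in lep grid j..rep grid j, ((ρ τ j).eval y) ^ 2)
            + ∫ y in lep grid j..rep grid j, ((w τ j).eval y) ^ 2 := by
      funext τ
      exact intervalIntegral.integral_add
        (((ρ τ j).continuous.pow 2).intervalIntegrable _ _)
        (((w τ j).continuous.pow 2).intervalIntegrable _ _)
    have h1 := sq_int_deriv k (lep grid j) (rep grid j) (fun τ => ρ τ j) (ρ' s j)
      (fun τ => (hdeg τ j).1) s (hρ' s j)
    have h2 := sq_int_deriv k (lep grid j) (rep grid j) (fun τ => w τ j) (w' s j)
      (fun τ => (hdeg τ j).2.1) s (hw' s j)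
    have hval : (∫ y in lep grid j..rep grid j, 2 * (ρ s j).eval y * (ρ' s j).eval y)
        + (∫ y in lep grid j..rep grid j, 2 * (w s j).eval y * (w' s j).eval y) = 0 := by
      have e1 := scheme1 s j (ρ s j) (hdeg s j).1
      have e2 := scheme2 s j (w s j) (hdeg s j).2.1
      have c1 : (∫ y in lep grid j..rep grid j, 2 * (ρ s j).eval y * (ρ' s j).eval y)
          = 2 * cellInt grid j (fun y => (ρ' s j).eval y * (ρ s j).eval y) := by
        rw [show (2 : ℝ) * cellInt grid j (fun y => (ρ' s j).eval y * (ρ s j).eval y)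
            = ∫ y in lep grid j..rep grid j, 2 * ((ρ' s j).eval y * (ρ s j).eval y) from
          (intervalIntegral.integral_const_mul (2:ℝ) _).symm]
        exact intervalIntegral.integral_congr fun y _ => by ring
      have c2 : (∫ y in lep grid j..rep grid j, 2 * (w s j).eval y * (w' s j).eval y)
          = 2 * cellInt grid j (fun y => (w' s j).eval y * (w s j).eval y) := by
        rw [show (2 : ℝ) * cellInt grid j (fun y => (w' s j).eval y * (w s j).eval y)
            = ∫ y in lep grid j..rep grid j, 2 * ((w' s j).eval y * (w s j).eval y) from
          (intervalIntegral.integral_const_mul (2:ℝ) _).symm]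
        exact intervalIntegral.integral_congr fun y _ => by ring
      have c3 : cellInt grid j (fun y => (ρ s j).eval y * (u s j).eval y * (w s j).eval y)
          = cellInt grid j (fun y => (u s j).eval y * (w s j).eval y * (ρ s j).eval y) :=
        intervalIntegral.integral_congr fun y _ => by ring
      rw [c1, c2]
      linarith [e1, e2, c3]
    rw [hsplit]
    exact hval ▸ (h1.add h2)
  have hsum := HasDerivAt.fun_sum (fun j (_ : j ∈ (Finset.univ : Finset (Fin (N + 1)))) => hD j)
  simpa using hsum


end
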